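/- Let ψ: ℝ⁺ → ℝ⁺ be decreasing and set Ψ(s) = ψ(s)^(−n/(n+1)). If x ∈ ℝⁿ and v ∈ ℚⁿ ∩ [0,1]ⁿ satisfy d(x,v) ≤ ψ(H(v)), then for t defined by e^t = Ψ(H(v)), the vector a_t u_x 𝐯 attains its sup-norm in the first coordinate, i.e. |⟨e₁, a_t u_x 𝐯⟩| = ‖a_t u_x 𝐯‖, and ‖a_t u_x 𝐯‖ ≤ e^{−t} Ψ^{−1}(e^t). -/

import Mathlib

open Real Filter

/-- The unipotent matrix `u_x` with first column `(1, -x₁, …, -xₙ)`. -/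
noncomputable def uMat (n : ℕ) (x : Fin n → ℝ) : Matrix (Fin (n+1)) (Fin (n+1)) ℝ :=
  fun i j => if i = j then 1 else if j = 0 then Fin.cases 0 (fun k => -x k) i else 0

/-- The diagonal matrix `a_t = diag(e^{-t}, e^{t/n}, …, e^{t/n})`. -/
noncomputable def aMat (n : ℕ) (t : ℝ) : Matrix (Fin (n+1)) (Fin (n+1)) ℝ :=
  Matrix.diagonal (fun i => if i = 0 then Real.exp (-t) else Real.exp (t / n))

/-- The integer vector `𝐯 = (q, p₁, …, pₙ)` viewed in `ℝ^{n+1}` (with the sup norm). -/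
noncomputable def intVec (n : ℕ) (q : ℤ) (p : Fin n → ℤ) : Fin (n+1) → ℝ :=
  Fin.cases (q : ℝ) (fun k => (p k : ℝ))

/-- Dani correspondence, forward direction: if `d(x,v) ≤ ψ(H(v))` for a rational
point `v = p/q ∈ [0,1]ⁿ` and `e^t = Ψ(H(v))` where `Ψ(s) = ψ(s)^{-n/(n+1)}`, then
`a_t u_x 𝐯` attains its sup-norm on the first coordinate and
`‖a_t u_x 𝐯‖ ≤ e^{-t} H(v) = e^{-t} Ψ^{-1}(e^t)`. -/
lemma pi_norm_eq_abs_zero {m : ℕ} (w : Fin (m+1) → ℝ) (h : ∀ i, |w i| ≤ |w 0|) :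
    ‖w‖ = |w 0| := by
  refine le_antisymm ?_ (norm_le_pi_norm w 0)
  rw [pi_norm_le_iff_of_nonneg (abs_nonneg _)]
  exact h

theorem dani_forward (n : ℕ) (hn : 1 ≤ n) (ψ : ℝ → ℝ)
    (hψpos : ∀ s > 0, 0 < ψ s) (hψdec : StrictAntiOn ψ (Set.Ioi 0))
    (x : Fin n → ℝ) (q : ℤ) (hq : 0 < q) (p : Fin n → ℤ)
    (hprim : Finset.univ.gcd (fun i : Fin (n+1) => (Fin.cases q p i : ℤ)) = 1)
    (hbox : ∀ i, 0 ≤ (p i : ℝ) / q ∧ (p i : ℝ) / q ≤ 1)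
    (H : ℝ) (hH : H = ‖intVec n q p‖)
    (hdist : ‖x - fun i => (p i : ℝ) / q‖ ≤ ψ H)
    (t : ℝ) (ht : Real.exp t = (ψ H) ^ (-(n : ℝ) / ((n : ℝ) + 1))) :
    |((aMat n t * uMat n x).mulVec (intVec n q p)) 0|
        = ‖(aMat n t * uMat n x).mulVec (intVec n q p)‖ ∧
      ‖(aMat n t * uMat n x).mulVec (intVec n q p)‖ ≤ Real.exp (-t) * H := by
  have hq1 : (1:ℝ) ≤ (q:ℝ) := by exact_mod_cast hq
  have hq0 : (0:ℝ) < (q:ℝ) := lt_of_lt_of_le one_pos hq1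
  have hqne : (q:ℝ) ≠ 0 := ne_of_gt hq0
  have hn0 : (n:ℝ) ≠ 0 := by positivity
  have hn1 : (n:ℝ) + 1 ≠ 0 := by positivity
  -- bounds on p
  have hp : ∀ k, |(p k : ℝ)| ≤ (q:ℝ) := by
    intro k
    rcases hbox k with ⟨h1, h2⟩
    have hpk0 : (0:ℝ) ≤ (p k : ℝ) := by
      have h := mul_le_mul_of_nonneg_right h1 hq0.le
      rwa [zero_mul, div_mul_cancel₀ _ hqne] at h
    have hpk1 : (p k : ℝ) ≤ (q:ℝ) := by
      have := (div_le_one hq0).mp h2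
      linarith
    rw [abs_of_nonneg hpk0]; exact hpk1
  -- H = q
  have hHq : H = (q:ℝ) := by
    rw [hH, pi_norm_eq_abs_zero]
    · simp [intVec, abs_of_pos hq0]
    · intro i
      induction i using Fin.cases with
      | zero => exact le_refl _
      | succ k =>
          simp only [intVec, Fin.cases_zero, Fin.cases_succ]
          rw [abs_of_pos hq0]
          exact hp k
  have hHpos : 0 < H := hHq ▸ hq0
  have hc : 0 < ψ H := hψpos H hHpos
  -- vector computation
  set v := intVec n q p with hv
  have hv0 : v 0 = (q:ℝ) := by simp [hv, intVec]
  have hvk : ∀ k : Fin n, v k.succ = (p k : ℝ) := by intro k; simp [hv, intVec]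
  have hU0 : (uMat n x).mulVec v 0 = (q:ℝ) := by
    rw [Matrix.mulVec, dotProduct, Finset.sum_eq_single (0 : Fin (n+1))]
    · simpa [uMat] using hv0
    · intro j _ hj
      simp [uMat, hj, Ne.symm hj]
    · simp
  have hUk : ∀ k : Fin n, (uMat n x).mulVec v k.succ = (p k : ℝ) - x k * q := by
    intro k
    rw [Matrix.mulVec, dotProduct, Fin.sum_univ_succ]
    have h1 : uMat n x k.succ 0 = -x k := by
      simp [uMat, Fin.succ_ne_zero]
    rw [h1, hv0]
    have h2 : ∀ j : Fin n, uMat n x k.succ j.succ = if k = j then 1 else 0 := by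
      intro j
      simp [uMat, Fin.succ_ne_zero, Fin.succ_inj]
    have h3 : ∑ j : Fin n, uMat n x k.succ j.succ * v j.succ = (p k : ℝ) := by
      rw [Finset.sum_eq_single k]
      · rw [h2, if_pos rfl, one_mul, hvk]
      · intro j _ hj
        rw [h2, if_neg (Ne.symm hj), zero_mul]
      · simp
    rw [h3]; ring
  set w := (aMat n t * uMat n x).mulVec v with hwdef
  have hw0 : w 0 = Real.exp (-t) * q := by
    rw [hwdef, ← Matrix.mulVec_mulVec, aMat, Matrix.mulVec_diagonal, hU0]
    simp
  have hwk : ∀ k : Fin n, w k.succ = Real.exp (t/n) * ((p k : ℝ) - x k * q) := by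
    intro k
    rw [hwdef, ← Matrix.mulVec_mulVec, aMat, Matrix.mulVec_diagonal, hUk]
    simp [Fin.succ_ne_zero]
  -- key exponent identity
  have hkey : Real.exp (t/n) * ψ H = Real.exp (-t) := by
    have het : Real.exp (t/n) = (ψ H) ^ (-(1:ℝ) / ((n:ℝ)+1)) := by
      have h1 : Real.exp (t/n) = (Real.exp t) ^ ((n:ℝ)⁻¹) := by
        rw [← Real.exp_log (Real.rpow_pos_of_pos (Real.exp_pos t) _)]
        rw [Real.log_rpow (Real.exp_pos t), Real.log_exp]
        ring_nf
      rw [h1, ht, ← Real.rpow_mul hc.le]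
      congr 1
      field_simp
    have hemt : Real.exp (-t) = (ψ H) ^ ((n:ℝ) / ((n:ℝ)+1)) := by
      rw [Real.exp_neg, ht, ← Real.rpow_neg hc.le]
      congr 1
      ring
    rw [het, hemt]
    calc (ψ H) ^ (-(1:ℝ) / ((n:ℝ)+1)) * ψ H
        = (ψ H) ^ (-(1:ℝ) / ((n:ℝ)+1)) * (ψ H) ^ (1:ℝ) := by rw [Real.rpow_one]
      _ = (ψ H) ^ (-(1:ℝ) / ((n:ℝ)+1) + 1) := by rw [← Real.rpow_add hc]
      _ = (ψ H) ^ ((n:ℝ) / ((n:ℝ)+1)) := by congr 1; field_simp; ring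
  -- coordinate bound
  have hbound : ∀ k : Fin n, |w k.succ| ≤ Real.exp (-t) * q := by
    intro k
    rw [hwk, abs_mul, abs_of_pos (Real.exp_pos _)]
    have hd : |x k - (p k : ℝ)/q| ≤ ψ H := by
      have := norm_le_pi_norm (x - fun i => (p i : ℝ)/q) k
      simp only [Pi.sub_apply, Real.norm_eq_abs] at this
      exact this.trans hdist
    have heq : |(p k : ℝ) - x k * q| = |x k - (p k : ℝ)/q| * q := by
      rw [abs_sub_comm, ← abs_of_pos hq0, ← abs_mul]
      congr 1
      field_simp
      rw [abs_of_pos hq0]; ring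
    rw [heq, ← mul_assoc, ← hkey]
    have : Real.exp (t/n) * |x k - (p k:ℝ)/q| ≤ Real.exp (t/n) * ψ H :=
      mul_le_mul_of_nonneg_left hd (Real.exp_pos _).le
    calc Real.exp (t/n) * |x k - (p k:ℝ)/q| * q
        ≤ Real.exp (t/n) * ψ H * q := mul_le_mul_of_nonneg_right this hq0.le
      _ = _ := rfl
  have habs0 : |w 0| = Real.exp (-t) * q := by
    rw [hw0, abs_of_pos (by positivity)]
  have hall : ∀ i, |w i| ≤ |w 0| := by
    intro i
    induction i using Fin.cases with
    | zero => exact le_refl _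
    | succ k => rw [habs0]; exact hbound k
  have hnorm : ‖w‖ = |w 0| := pi_norm_eq_abs_zero w hall
  refine ⟨hnorm.symm, ?_⟩
  rw [hnorm, habs0, hHq]
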